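/- For every k ∈ {1, …, m} and every integer j with 0 ≤ j ≤ n_k − 1, one has ∫_0^∞ P_{(n_1,…,n_m)}(x) · x^{j+p} · exp(−β_k x) dx = 0. -/

import Mathlib

open MeasureTheory Finset

/-- The multiple Laguerre function of type II (integral representation),
with contour a counterclockwise circle of center `0` and radius `r`. -/
noncomputable def mlP {m : ℕ} (β : Fin m → ℝ) (p : ℕ) (r : ℝ) (ν : Fin m → ℕ)
    (x : ℝ) : ℂ :=
  (((∑ k, ν k) + p).factorial : ℂ) * (x : ℂ) ^ (-(p : ℤ)) /
      (2 * Real.pi * Complex.I * ∏ k, (-(β k : ℂ)) ^ (ν k)) *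
    ∮ s in C((0 : ℂ), r),
      Complex.exp ((x : ℂ) * s) * s ^ (-(∑ k, ν k : ℤ) - (p : ℤ) - 1) *
        ∏ k, (s - (β k : ℂ)) ^ (ν k)

/-- The multiple Laguerre linear form of type I (integral representation),
with contour a counterclockwise circle of center `c` and radius `R`. -/
noncomputable def mlQ {m : ℕ} (β : Fin m → ℝ) (p : ℕ) (c R : ℝ) (ν : Fin m → ℕ)
    (y : ℝ) : ℂ :=
  -((∏ l, (-(β l : ℂ)) ^ (ν l)) * (y : ℂ) ^ p /
      (2 * Real.pi * Complex.I * (((∑ k, ν k) + p - 1).factorial : ℂ))) *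
    ∮ t in C((c : ℂ), R),
      Complex.exp (-((y : ℂ) * t)) * t ^ ((∑ k, ν k) + p - 1) *
        ∏ l, (t - (β l : ℂ)) ^ (-(ν l : ℤ))

lemma circleIntegrable_exp_zpow {r : ℝ} (hr : 0 < r) (x c : ℂ) (e : ℤ) :
    CircleIntegrable (fun z : ℂ => c * (Complex.exp (x * z) * z ^ e)) 0 r := by
  refine ContinuousOn.circleIntegrable hr.le ?_
  intro z hz
  have hz0 : z ≠ 0 := by
    rw [mem_sphere_zero_iff_norm] at hz
    intro h; rw [h] at hz; simp at hz; exact hr.ne' hz.symm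
  have h1 : ContinuousAt (fun z : ℂ => Complex.exp (x * z)) z :=
    (Complex.continuous_exp.comp (continuous_const.mul continuous_id)).continuousAt
  have h2 : ContinuousAt (fun z : ℂ => z ^ e) z := continuousAt_zpow₀ z e (Or.inl hz0)
  exact (continuousAt_const.mul (h1.mul h2)).continuousWithinAt

lemma circleIntegral_exp_zpow {r : ℝ} (hr : 0 < r) (x : ℂ) (k : ℕ) :
    (∮ s in C((0 : ℂ), r), Complex.exp (x * s) * s ^ (-(k : ℤ) - 1)) =
      2 * Real.pi * Complex.I * x ^ k / (k.factorial : ℂ) := by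
  induction k with
  | zero =>
      have h0 : (0 : ℂ) ∈ Metric.ball (0 : ℂ) r := by simpa using hr
      have hd : DiffContOnCl ℂ (fun s : ℂ => Complex.exp (x * s)) (Metric.ball (0 : ℂ) r) :=
        (Complex.differentiable_exp.comp (differentiable_id.const_mul x)).diffContOnCl
      have h := hd.circleIntegral_sub_inv_smul h0
      simp only [sub_zero, smul_eq_mul, mul_zero, Complex.exp_zero, mul_one] at h
      calc (∮ s in C((0 : ℂ), r), Complex.exp (x * s) * s ^ (-(0 : ℤ) - 1))
          = ∮ s in C((0 : ℂ), r), s⁻¹ * Complex.exp (x * s) := by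
            refine circleIntegral.integral_congr hr.le fun s hs => ?_
            norm_num [mul_comm]
        _ = 2 * Real.pi * Complex.I := h
        _ = 2 * Real.pi * Complex.I * x ^ 0 / ((0 : ℕ).factorial : ℂ) := by norm_num
  | succ k ih =>
      have hzero : (∮ z in C((0 : ℂ), r),
          (x * (Complex.exp (x * z) * z ^ (-(k : ℤ) - 1)) -
            ((k : ℂ) + 1) * (Complex.exp (x * z) * z ^ (-((k + 1 : ℕ) : ℤ) - 1)))) = 0 := by
        refine circleIntegral.integral_eq_zero_of_hasDerivWithinAt hr.le (f := fun z =>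
          Complex.exp (x * z) * z ^ (-(k : ℤ) - 1)) fun z hz => ?_
        have hz0 : z ≠ 0 := by
          rw [mem_sphere_zero_iff_norm] at hz
          intro h; rw [h] at hz; simp at hz; exact hr.ne' hz.symm
        have h1 : HasDerivAt (fun z : ℂ => Complex.exp (x * z)) (Complex.exp (x * z) * x) z := by
          simpa using ((hasDerivAt_id z).const_mul x).cexp
        have h2 : HasDerivAt (fun z : ℂ => z ^ (-(k : ℤ) - 1))
            ((-(k : ℂ) - 1) * z ^ (-(k : ℤ) - 1 - 1)) z := by
          have := hasDerivAt_zpow (-(k : ℤ) - 1) z (Or.inl hz0)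
          convert this using 2
          · rfl
          push_cast
          ring
        have h3 := h1.mul h2
        have he : (-((k + 1 : ℕ) : ℤ) - 1) = -(k : ℤ) - 1 - 1 := by push_cast; ring
        have heq : x * (Complex.exp (x * z) * z ^ (-(k : ℤ) - 1)) -
            ((k : ℂ) + 1) * (Complex.exp (x * z) * z ^ (-((k + 1 : ℕ) : ℤ) - 1)) =
            Complex.exp (x * z) * x * z ^ (-(k : ℤ) - 1) +
              Complex.exp (x * z) * ((-(k : ℂ) - 1) * z ^ (-(k : ℤ) - 1 - 1)) := by
          rw [he]; push_cast; ring
        rw [heq]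
        exact h3.hasDerivWithinAt
      rw [circleIntegral.integral_sub (circleIntegrable_exp_zpow hr x x _)
        (circleIntegrable_exp_zpow hr x _ _), circleIntegral.integral_const_mul,
        circleIntegral.integral_const_mul, ih, sub_eq_zero] at hzero
      have hk1 : ((k : ℂ) + 1) ≠ 0 := by
        have : ((k + 1 : ℕ) : ℂ) ≠ 0 := Nat.cast_ne_zero.mpr k.succ_ne_zero
        push_cast at this; exact this
      have hfac : ((k + 1).factorial : ℂ) = ((k : ℂ) + 1) * (k.factorial : ℂ) := by
        rw [Nat.factorial_succ]; push_cast; ring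
      have hfk : (k.factorial : ℂ) ≠ 0 := by exact_mod_cast k.factorial_ne_zero
      field_simp [hfac] at hzero ⊢
      linear_combination (∮ (z : ℂ) in C(0, r), Complex.exp (x * z) * z ^ (-((k + 1 : ℕ) : ℤ) - 1)) * hfac - hzero

lemma circleIntegral_finset_sum {ι : Type*} (s : Finset ι) (F : ι → ℂ → ℂ) (c : ℂ) (R : ℝ)
    (h : ∀ i ∈ s, CircleIntegrable (F i) c R) :
    (∮ z in C(c, R), ∑ i ∈ s, F i z) = ∑ i ∈ s, ∮ z in C(c, R), F i z := by
  calc (∮ z in C(c, R), ∑ i ∈ s, F i z)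
      = ∫ θ in (0 : ℝ)..(2 * Real.pi), ∑ i ∈ s,
          deriv (circleMap c R) θ • F i (circleMap c R θ) := by
        simp only [circleIntegral, Finset.smul_sum]
    _ = ∑ i ∈ s, ∮ z in C(c, R), F i z :=
        intervalIntegral.integral_finset_sum fun i hi => (h i hi).out

open Polynomial in
lemma polynomial_reverse_one : (1 : Polynomial ℂ).reverse = 1 := by
  rw [Polynomial.reverse, natDegree_one, ← C_1, reflect_C]
  simp

open Polynomial in
lemma polynomial_reverse_pow (f : Polynomial ℂ) (n : ℕ) :
    (f ^ n).reverse = f.reverse ^ n := by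
  induction n with
  | zero => simpa using polynomial_reverse_one
  | succ n ih => rw [pow_succ, reverse_mul_of_domain, ih, pow_succ]

open Polynomial in
lemma polynomial_reverse_prod {ι : Type*} (s : Finset ι) (f : ι → Polynomial ℂ) :
    (∏ i ∈ s, f i).reverse = ∏ i ∈ s, (f i).reverse := by
  classical
  induction s using Finset.cons_induction with
  | empty => simpa using polynomial_reverse_one
  | cons a s ha ih => rw [Finset.prod_cons, reverse_mul_of_domain, ih, Finset.prod_cons]

open Polynomial in
lemma polynomial_reflect_finset_sum {ι : Type*} (N : ℕ) (s : Finset ι) (f : ι → Polynomial ℂ) :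
    Polynomial.reflect N (∑ i ∈ s, f i) = ∑ i ∈ s, Polynomial.reflect N (f i) := by
  classical
  induction s using Finset.cons_induction with
  | empty => simp
  | cons a s ha ih => rw [Finset.sum_cons, reflect_add, ih, Finset.sum_cons]

open Polynomial in
lemma polynomial_reverse_X_sub_C (a : ℂ) :
    (Polynomial.X - Polynomial.C a).reverse = 1 - Polynomial.C a * Polynomial.X := by
  rw [Polynomial.reverse, natDegree_X_sub_C, reflect_sub, reflect_C,
    ← pow_one (Polynomial.X : Polynomial ℂ), reflect_monomial]
  norm_num [revAt_le]

open Polynomial in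
lemma mlP_eq {m : ℕ} (β : Fin m → ℝ) (p : ℕ) {r : ℝ} (hr : 0 < r)
    (n : Fin m → ℕ) (hP : (∏ k, (-(β k : ℂ)) ^ (n k)) ≠ 0) (x : ℝ) :
    mlP β p r n x = (x : ℂ) ^ (-(p : ℤ)) * (∏ k, (-(β k : ℂ)) ^ (n k))⁻¹ *
      ∑ d ∈ range ((∑ k, n k) + 1),
        (∏ l, (Polynomial.X - Polynomial.C ((β l : ℂ))) ^ (n l)).coeff d *
          ((((∑ k, n k) + p).factorial : ℂ) / (((∑ k, n k) + p - d).factorial : ℂ)) *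
          (x : ℂ) ^ ((∑ k, n k) + p - d) := by
  have h2pi : (2 * (Real.pi : ℂ) * Complex.I) ≠ 0 := by
    simp [Real.pi_ne_zero, Complex.I_ne_zero]
  set N := ∑ k, n k with hN
  set Q : Polynomial ℂ := ∏ l, (Polynomial.X - Polynomial.C ((β l : ℂ))) ^ (n l) with hQ
  have hQdeg : Q.natDegree = N := by
    rw [hQ, Polynomial.natDegree_prod _ _ fun i _ => pow_ne_zero _ (X_sub_C_ne_zero _)]
    simp [Polynomial.natDegree_pow, Polynomial.natDegree_X_sub_C, hN]
  have hint : (∮ s in C((0 : ℂ), r), Complex.exp ((x : ℂ) * s) * s ^ (-(N : ℤ) - (p : ℤ) - 1) *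
        ∏ l, (s - (β l : ℂ)) ^ (n l))
      = ∑ d ∈ range (N + 1),
          Q.coeff d * (2 * Real.pi * Complex.I * (x : ℂ) ^ (N + p - d) /
            (((N + p - d).factorial : ℂ))) := by
    rw [circleIntegral.integral_congr (f := fun s => Complex.exp ((x : ℂ) * s) *
        s ^ (-(N : ℤ) - (p : ℤ) - 1) * ∏ l, (s - (β l : ℂ)) ^ (n l))
        (g := fun s => ∑ d ∈ range (N + 1),
          Q.coeff d * (Complex.exp ((x : ℂ) * s) * s ^ (-((N + p - d : ℕ) : ℤ) - 1))) hr.le ?_]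
    · rw [circleIntegral_finset_sum _ _ _ _ fun d _ => circleIntegrable_exp_zpow hr _ _ _]
      refine Finset.sum_congr rfl fun d hd => ?_
      rw [circleIntegral.integral_const_mul, circleIntegral_exp_zpow hr]
    · intro s hs
      have hs0 : s ≠ 0 := by
        rw [Metric.mem_sphere] at hs
        intro h; rw [h] at hs; simp at hs; exact hr.ne' hs.symm
      have hQe : ∏ l, (s - (β l : ℂ)) ^ (n l) = Q.eval s := by
        simp [hQ, Polynomial.eval_prod]
      simp only [hQe, Polynomial.eval_eq_sum_range' (n := N + 1) (by rw [hQdeg]; exact Nat.lt_succ_self N) s,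
        Finset.mul_sum]
      refine Finset.sum_congr rfl fun d hd => ?_
      have hdN : d ≤ N := Nat.lt_succ_iff.mp (Finset.mem_range.mp hd)
      have he : (-(N : ℤ) - (p : ℤ) - 1) + (d : ℤ) = -((N + p - d : ℕ) : ℤ) - 1 := by
        have h1 : d ≤ N + p := le_trans hdN (Nat.le_add_right _ _)
        omega
      calc Complex.exp ((x : ℂ) * s) * s ^ (-(N : ℤ) - (p : ℤ) - 1) * (Q.coeff d * s ^ d)
          = Q.coeff d * (Complex.exp ((x : ℂ) * s) *
              (s ^ (-(N : ℤ) - (p : ℤ) - 1) * s ^ (d : ℤ))) := by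
            rw [zpow_natCast]; ring
        _ = Q.coeff d * (Complex.exp ((x : ℂ) * s) * s ^ (-((N + p - d : ℕ) : ℤ) - 1)) := by
            rw [← zpow_add₀ hs0, he]
  rw [mlP]
  simp only [← hN]
  have hcast2 : ∑ k, ((n k : ℕ) : ℤ) = (N : ℤ) := by rw [hN]; exact (Nat.cast_sum _ _).symm
  simp only [hcast2]
  rw [hint, Finset.mul_sum, Finset.mul_sum]
  refine Finset.sum_congr rfl fun d hd => ?_
  have hfne : (((N + p - d).factorial : ℂ)) ≠ 0 := by
    exact_mod_cast (N + p - d).factorial_ne_zero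
  have hπ : (Real.pi : ℂ) ≠ 0 := by exact_mod_cast Real.pi_ne_zero
  have hprod : ∏ i : Fin m, ((β i : ℂ) ^ n i * (-1 : ℂ) ^ n i) = ∏ k, (-(β k : ℂ)) ^ n k := by
    refine Finset.prod_congr rfl fun i _ => ?_
    rw [neg_pow]; ring
  field_simp

open Polynomial in
lemma key_sum {m : ℕ} (β : Fin m → ℝ) (hβpos : ∀ k, 0 < β k) (n : Fin m → ℕ) (p : ℕ)
    (k : Fin m) (j : ℕ) (hj : j < n k) :
    ∑ d ∈ range ((∑ i, n i) + 1),
      (∏ l, (Polynomial.X - Polynomial.C ((β l : ℂ))) ^ (n l)).coeff d *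
        (((∑ i, n i) + p + j - d).descFactorial j : ℂ) *
          ((β k : ℂ)⁻¹) ^ ((∑ i, n i) + p - d) = 0 := by
  classical
  have hβk : (β k : ℂ) ≠ 0 := by
    exact_mod_cast (hβpos k).ne'
  set N := ∑ i, n i with hN
  set Q : Polynomial ℂ := ∏ l, (Polynomial.X - Polynomial.C ((β l : ℂ))) ^ (n l) with hQ
  set u : ℂ := (β k : ℂ)⁻¹ with hu
  have hQdeg : Q.natDegree = N := by
    rw [hQ, Polynomial.natDegree_prod _ _ fun i _ => pow_ne_zero _ (X_sub_C_ne_zero _)]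
    simp [Polynomial.natDegree_pow, Polynomial.natDegree_X_sub_C, hN]
  set H : Polynomial ℂ :=
    ∑ d ∈ range (N + 1), Polynomial.C (Q.coeff d) * Polynomial.X ^ (N + p + j - d) with hH
  have h1 : Polynomial.reflect N Q =
      ∑ d ∈ range (N + 1), Polynomial.C (Q.coeff d) * Polynomial.X ^ (N - d) := by
    conv_lhs => rw [Q.as_sum_range' (N + 1) (by rw [hQdeg]; exact Nat.lt_succ_self N)]
    rw [polynomial_reflect_finset_sum]
    refine Finset.sum_congr rfl fun d hd => ?_
    rw [← Polynomial.C_mul_X_pow_eq_monomial, Polynomial.reflect_C_mul_X_pow,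
      Polynomial.revAt_le (Nat.lt_succ_iff.mp (Finset.mem_range.mp hd))]
  have h2 : Polynomial.reflect N Q =
      ∏ l, (1 - Polynomial.C ((β l : ℂ)) * Polynomial.X) ^ (n l) := by
    have hrev : Polynomial.reflect N Q = Q.reverse := by rw [Polynomial.reverse, hQdeg]
    rw [hrev, hQ, polynomial_reverse_prod]
    refine Finset.prod_congr rfl fun l _ => ?_
    rw [polynomial_reverse_pow, polynomial_reverse_X_sub_C]
  have hHeq : H = Polynomial.X ^ (p + j) *
      ∏ l, (1 - Polynomial.C ((β l : ℂ)) * Polynomial.X) ^ (n l) := by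
    calc H = ∑ d ∈ range (N + 1),
          Polynomial.X ^ (p + j) * (Polynomial.C (Q.coeff d) * Polynomial.X ^ (N - d)) := by
          rw [hH]
          refine Finset.sum_congr rfl fun d hd => ?_
          have hdN : d ≤ N := Nat.lt_succ_iff.mp (Finset.mem_range.mp hd)
          rw [show N + p + j - d = (p + j) + (N - d) from by omega, pow_add]
          ring
      _ = Polynomial.X ^ (p + j) * Polynomial.reflect N Q := by rw [← Finset.mul_sum, h1]
      _ = _ := by rw [h2]
  have hR1 : Polynomial.eval 0 (∏ l, (1 - Polynomial.C ((β l : ℂ)) * Polynomial.X) ^ (n l))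
      = 1 := by simp [Polynomial.eval_prod]
  have hRne : (∏ l, (1 - Polynomial.C ((β l : ℂ)) * Polynomial.X) ^ (n l)) ≠ 0 := by
    intro h; rw [h] at hR1; simp at hR1
  have hHne : H ≠ 0 := by
    rw [hHeq]; exact mul_ne_zero (pow_ne_zero _ Polynomial.X_ne_zero) hRne
  have hβu : (-(β k : ℂ)) * u = -1 := by rw [hu]; field_simp
  have hu1 : (1 : Polynomial ℂ) - Polynomial.C ((β k : ℂ)) * Polynomial.X =
      Polynomial.C (-(β k : ℂ)) * (Polynomial.X - Polynomial.C u) := by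
    rw [mul_sub, ← Polynomial.C_mul, hβu, map_neg, map_neg, Polynomial.C_1]
    ring
  have hdvd : (Polynomial.X - Polynomial.C u) ^ (n k) ∣ H := by
    refine ⟨Polynomial.X ^ (p + j) * Polynomial.C (-(β k : ℂ)) ^ (n k) *
      ∏ l ∈ univ.erase k, (1 - Polynomial.C ((β l : ℂ)) * Polynomial.X) ^ (n l), ?_⟩
    rw [hHeq, ← Finset.mul_prod_erase univ _ (Finset.mem_univ k), hu1, mul_pow]
    ring
  have hroot := Polynomial.isRoot_iterate_derivative_of_lt_rootMultiplicity
    (lt_of_lt_of_le hj ((Polynomial.le_rootMultiplicity_iff hHne).mpr hdvd))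
  have heval : ((Polynomial.derivative)^[j] H).eval u =
      ∑ d ∈ range (N + 1), Q.coeff d * ((N + p + j - d).descFactorial j : ℂ) *
        u ^ (N + p - d) := by
    rw [hH, Polynomial.iterate_derivative_sum]
    simp only [Polynomial.iterate_derivative_C_mul, Polynomial.iterate_derivative_X_pow_eq_smul]
    rw [Polynomial.eval_finset_sum]
    refine Finset.sum_congr rfl fun d hd => ?_
    have hdN : d ≤ N := Nat.lt_succ_iff.mp (Finset.mem_range.mp hd)
    simp only [Polynomial.eval_mul, Polynomial.eval_C, Polynomial.eval_smul, Polynomial.eval_pow,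
      Polynomial.eval_X, smul_eq_mul]
    rw [show N + p + j - d - j = N + p - d from by omega]
    ring
  rw [← heval]
  exact hroot

theorem stmt_11 (m : ℕ) (hm : 1 ≤ m) (β : Fin m → ℝ) (hβpos : ∀ k, 0 < β k)
    (hβ : Function.Injective β) (n : Fin m → ℕ) (hn : ∀ k, 1 ≤ n k) (p : ℕ)
    (r : ℝ) (hr : 0 < r) (hrβ : ∀ k, r < β k) :
    ∀ k : Fin m, ∀ j : ℕ, j < n k →
      ∫ x in Set.Ioi (0 : ℝ),
        mlP β p r n x * (x : ℂ) ^ (j + p) * Complex.exp (-((β k : ℂ) * x)) = 0 := by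
  intro k j hj
  classical
  have hβkC : ((β k : ℝ) : ℂ) ≠ 0 := by exact_mod_cast (hβpos k).ne'
  have hP : (∏ l, (-(β l : ℂ)) ^ (n l)) ≠ 0 :=
    Finset.prod_ne_zero_iff.mpr fun i _ =>
      pow_ne_zero _ (neg_ne_zero.mpr (by exact_mod_cast (hβpos i).ne'))
  set N := ∑ i, n i with hN
  set Q : Polynomial ℂ := ∏ l, (Polynomial.X - Polynomial.C ((β l : ℂ))) ^ (n l) with hQ
  have hIg : ∀ e : ℕ, IntegrableOn (fun x : ℝ => x ^ e * Real.exp (-(β k * x)))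
      (Set.Ioi 0) := by
    intro e
    have h := integrableOn_rpow_mul_exp_neg_mul_rpow (p := 1) (s := (e : ℝ)) (b := β k)
      (lt_of_lt_of_le neg_one_lt_zero (Nat.cast_nonneg e)) one_pos (hβpos k)
    simpa [Real.rpow_natCast, Real.rpow_one, neg_mul] using h
  have hval : ∀ e : ℕ, (∫ x in Set.Ioi (0 : ℝ), x ^ e * Real.exp (-(β k * x)))
      = (e.factorial : ℝ) / (β k) ^ (e + 1) := by
    intro e
    have h := Real.integral_rpow_mul_exp_neg_mul_Ioi (a := (e : ℝ) + 1) (r := β k)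
      (by positivity) (hβpos k)
    rw [Real.Gamma_nat_eq_factorial] at h
    simp only [show ((e : ℝ) + 1 - 1) = ((e : ℕ) : ℝ) from by ring, Real.rpow_natCast] at h
    rw [show ((e : ℝ) + 1) = ((e + 1 : ℕ) : ℝ) from by push_cast; ring, Real.rpow_natCast] at h
    rw [h, one_div, inv_pow]
    ring
  rw [MeasureTheory.setIntegral_congr_fun (measurableSet_Ioi) (g := fun x : ℝ =>
      ∑ d ∈ range (N + 1),
        ((∏ l, (-(β l : ℂ)) ^ (n l))⁻¹ * Q.coeff d *
          (((N + p).factorial : ℂ) / (((N + p - d).factorial : ℂ)))) *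
          ((x ^ (N + p + j - d) * Real.exp (-(β k * x)) : ℝ) : ℂ))
      (fun x hx => ?_)]
  · rw [MeasureTheory.integral_finset_sum (range (N + 1)) (f := fun d (x : ℝ) =>
        ((∏ l, (-(β l : ℂ)) ^ (n l))⁻¹ * Q.coeff d *
          (((N + p).factorial : ℂ) / (((N + p - d).factorial : ℂ)))) *
          ((x ^ (N + p + j - d) * Real.exp (-(β k * x)) : ℝ) : ℂ))
        (fun d _ => ((hIg (N + p + j - d)).ofReal.const_mul _))]
    have hseq : ∀ d ∈ range (N + 1),
        (∫ x in Set.Ioi (0 : ℝ),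
          ((∏ l, (-(β l : ℂ)) ^ (n l))⁻¹ * Q.coeff d *
            (((N + p).factorial : ℂ) / (((N + p - d).factorial : ℂ)))) *
            ((x ^ (N + p + j - d) * Real.exp (-(β k * x)) : ℝ) : ℂ))
        = ((∏ l, (-(β l : ℂ)) ^ (n l))⁻¹ * ((N + p).factorial : ℂ) * ((β k : ℂ)⁻¹) ^ (j + 1)) *
            (Q.coeff d * (((N + p + j - d).descFactorial j : ℂ)) *
              ((β k : ℂ)⁻¹) ^ (N + p - d)) := by
      intro d hd
      have hdN : d ≤ N := Nat.lt_succ_iff.mp (Finset.mem_range.mp hd)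
      have hic : (∫ a in Set.Ioi (0 : ℝ),
          ((a ^ (N + p + j - d) * Real.exp (-(β k * a)) : ℝ) : ℂ))
          = ((((N + p + j - d).factorial : ℝ) / (β k) ^ (N + p + j - d + 1) : ℝ) : ℂ) := by
        rw [← hval (N + p + j - d)]
        exact integral_ofReal
      rw [MeasureTheory.integral_const_mul, hic]
      have hfacnat := Nat.factorial_mul_descFactorial
        (show j ≤ N + p + j - d from by omega)
      rw [show N + p + j - d - j = N + p - d from by omega] at hfacnat
      have hfac : ((N + p + j - d).factorial : ℂ)
          = ((N + p + j - d).descFactorial j : ℂ) * ((N + p - d).factorial : ℂ) := by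
        rw [← hfacnat]; push_cast; ring
      have hpow : ((β k : ℂ)⁻¹) ^ (j + 1) * ((β k : ℂ)⁻¹) ^ (N + p - d)
          = ((β k : ℂ) ^ (N + p + j - d + 1))⁻¹ := by
        rw [← pow_add, show (j + 1) + (N + p - d) = N + p + j - d + 1 from by omega, inv_pow]
      have hfne : (((N + p - d).factorial : ℂ)) ≠ 0 := by
        exact_mod_cast (N + p - d).factorial_ne_zero
      push_cast
      rw [hfac]
      field_simp
      rw [show (N + p + j - d + 1) = (j + 1) + (N + p - d) from by omega, pow_add]
      ring
      simp only [one_div, inv_pow]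
      field_simp
    rw [Finset.sum_congr rfl hseq, ← Finset.mul_sum]
    have hks := key_sum β hβpos n p k j hj
    simp only [← hN, ← hQ] at hks
    rw [hks, mul_zero]
  · have hx0 : (0 : ℝ) < x := hx
    have hxC : (x : ℂ) ≠ 0 := by exact_mod_cast hx0.ne'
    rw [mlP_eq β p hr n hP x]
    simp only [← hN, ← hQ]
    rw [Finset.mul_sum, Finset.sum_mul, Finset.sum_mul]
    refine Finset.sum_congr rfl fun d hd => ?_
    have hdN : d ≤ N := Nat.lt_succ_iff.mp (Finset.mem_range.mp hd)
    have hxe : (x : ℂ) ^ (N + p - d) * (x : ℂ) ^ (-(p : ℤ)) * (x : ℂ) ^ (j + p)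
        = (x : ℂ) ^ (N + p + j - d) := by
      rw [← zpow_natCast (x : ℂ) (N + p - d), ← zpow_natCast (x : ℂ) (j + p),
        ← zpow_add₀ hxC, ← zpow_add₀ hxC, ← zpow_natCast (x : ℂ) (N + p + j - d)]
      congr 1
      omega
    push_cast
    rw [← hxe]
    ring
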